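/- Let u : ℝ → ℝ be three times continuously differentiable (ContDiff ℝ 3) and b ∈ ℝ. Then there exist constants C ≥ 0 and h₀ > 0 such that for all 0 < h ≤ h₀, | (5u(b+h) − 4u(b+2h) + u(b+3h) − 2u(b))/(4h²) + (1/4)·u''(b+h) | ≤ C h. In particular this boundary-modified numerical moment is O(1) as h → 0⁺, so the auxiliary boundary condition δ²u = 0 yields a local truncation error of order h^p at grid nodes adjacent to the boundary when the moment is scaled by γ h^p. -/

import Mathlib

open Set

private lemma iterWithin_eq_global (u : ℝ → ℝ) (hu : ContDiff ℝ 3 u) {s : Set ℝ}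
    (hs : UniqueDiffOn ℝ s) {x : ℝ} (hx : x ∈ s) {k : ℕ} (hk : (k : WithTop ℕ∞) ≤ 3) :
    iteratedDerivWithin k u s x = iteratedDeriv k u x := by
  have hp : HasFTaylorSeriesUpTo 3 u (ftaylorSeries ℝ u) := contDiff_iff_ftaylorSeries.1 hu
  have h1 := (hp.hasFTaylorSeriesUpToOn s).eq_iteratedFDerivWithin_of_uniqueDiffOn hk hs hx
  have h2 := hp.eq_iteratedFDeriv hk x
  rw [iteratedDerivWithin_eq_iteratedFDerivWithin, iteratedDeriv_eq_iteratedFDeriv, ← h1, h2]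

/-- Boundary-modified numerical moment with auxiliary condition (3.4a):
after eliminating the ghost value via `δ²_h u (b) = 0`, the moment at the first
interior node `b + h` equals `(5u(b+h) − 4u(b+2h) + u(b+3h) − 2u(b))/(4h²)`, which
is `−(1/4)u''(b+h) + O(h)`; i.e. the moment itself is `O(1)` as `h → 0⁺`. -/
theorem boundary_moment_bc2a_truncation
    (u : ℝ → ℝ) (hu : ContDiff ℝ 3 u) (b : ℝ) :
    ∃ C : ℝ, 0 ≤ C ∧ ∃ h₀ : ℝ, 0 < h₀ ∧ ∀ h : ℝ, 0 < h → h ≤ h₀ →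
      |(5 * u (b + h) - 4 * u (b + 2 * h) + u (b + 3 * h) - 2 * u b) / (4 * h ^ 2)
        + (1 / 4) * iteratedDeriv 2 u (b + h)| ≤ C * h := by
  set s : Set ℝ := Icc b (b + 3) with hs_def
  have hb3 : b ≤ b + 3 := by linarith
  have hsU : UniqueDiffOn ℝ s := uniqueDiffOn_Icc (by linarith)
  -- bound on the third derivative
  obtain ⟨M, hM⟩ := (isCompact_Icc (a := b) (b := b + 3)).exists_bound_of_continuousOn
    ((hu.continuous_iteratedDeriv 3 le_rfl).continuousOn)
  set M' : ℝ := max M 0 with hM'_def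
  have hM'0 : 0 ≤ M' := le_max_right _ _
  have hM' : ∀ x ∈ s, |iteratedDeriv 3 u x| ≤ M' := fun x hx =>
    (hM x hx).trans (le_max_left _ _)
  refine ⟨9 * M', by positivity, 1, one_pos, fun h hh hh1 => ?_⟩
  have hbs : b ∈ s := by constructor <;> simp <;> linarith
  have hmem : ∀ k : ℝ, 0 ≤ k → k ≤ 3 → b + k * h ∈ s := by
    intro k hk0 hk3
    constructor
    · nlinarith
    · nlinarith
  -- Taylor remainder bound at the three points
  have hCbound : ∀ y ∈ s, ‖iteratedDerivWithin 3 u s y‖ ≤ M' := by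
    intro y hy
    rw [iterWithin_eq_global u hu hsU hy le_rfl]
    exact hM' y hy
  have hcd : ContDiffOn ℝ (2 + 1) u s := (hu.of_le (by norm_num)).contDiffOn
  have taylor_bd : ∀ x ∈ s, |u x - taylorWithinEval u 2 s b x| ≤ M' * (x - b) ^ 3 / 2 := by
    intro x hx
    have := taylor_mean_remainder_bound (n := 2) hb3 hcd hx hCbound
    simpa [Nat.factorial] using this
  -- explicit form of the Taylor polynomial
  set d0 : ℝ := u b
  set d1 : ℝ := iteratedDeriv 1 u b
  set d2 : ℝ := iteratedDeriv 2 u b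
  have taylor_eq : ∀ x : ℝ, taylorWithinEval u 2 s b x
      = d0 + (x - b) * d1 + (x - b) ^ 2 / 2 * d2 := by
    intro x
    rw [taylor_within_apply]
    rw [Finset.sum_range_succ, Finset.sum_range_succ, Finset.sum_range_one]
    rw [iterWithin_eq_global u hu hsU hbs (by norm_num),
        iterWithin_eq_global u hu hsU hbs (by norm_num),
        iterWithin_eq_global u hu hsU hbs (by norm_num)]
    simp only [Nat.factorial, smul_eq_mul, iteratedDeriv_zero, pow_zero, pow_one]
    push_cast
    ring
  -- remainders
  have hx1 : b + 1 * h ∈ s := hmem 1 zero_le_one (by norm_num)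
  have hx2 : b + 2 * h ∈ s := hmem 2 (by norm_num) (by norm_num)
  have hx3 : b + 3 * h ∈ s := hmem 3 (by norm_num) le_rfl
  have R1 := taylor_bd _ hx1
  have R2 := taylor_bd _ hx2
  have R3 := taylor_bd _ hx3
  rw [taylor_eq] at R1 R2 R3
  have e1 : b + 1 * h - b = h := by ring
  have e2 : b + 2 * h - b = 2 * h := by ring
  have e3 : b + 3 * h - b = 3 * h := by ring
  rw [e1] at R1; rw [e2] at R2; rw [e3] at R3
  -- MVT bound on the second derivative
  have hd2lip : |iteratedDeriv 2 u (b + h) - d2| ≤ M' * h := by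
    have hderiv : ∀ x ∈ s, HasDerivWithinAt (iteratedDeriv 2 u) (iteratedDeriv 3 u x) s x := by
      intro x hx
      have hdx : DifferentiableAt ℝ (iteratedDeriv 2 u) x :=
        (hu.differentiable_iteratedDeriv 2 (by norm_num)).differentiableAt
      have h3 : iteratedDeriv 3 u = deriv (iteratedDeriv 2 u) := iteratedDeriv_succ
      have : HasDerivAt (iteratedDeriv 2 u) (iteratedDeriv 3 u x) x := by
        rw [h3]; exact hdx.hasDerivAt
      exact this.hasDerivWithinAt
    have hbnd : ∀ x ∈ s, ‖iteratedDeriv 3 u x‖ ≤ M' := fun x hx => hM' x hx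
    have := (convex_Icc b (b + 3)).norm_image_sub_le_of_norm_hasDerivWithin_le
      hderiv hbnd hbs (hmem 1 zero_le_one (by norm_num))
    have hnorm : ‖(b + 1 * h) - b‖ = h := by
      rw [e1, Real.norm_eq_abs, abs_of_pos hh]
    rw [hnorm] at this
    simpa [Real.norm_eq_abs, d2] using this
  -- put everything together
  have key : (5 * u (b + h) - 4 * u (b + 2 * h) + u (b + 3 * h) - 2 * u b) / (4 * h ^ 2)
      + (1 / 4) * iteratedDeriv 2 u (b + h)
      = (5 * (u (b + 1 * h) - (d0 + h * d1 + h ^ 2 / 2 * d2))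
        - 4 * (u (b + 2 * h) - (d0 + 2 * h * d1 + (2 * h) ^ 2 / 2 * d2))
        + (u (b + 3 * h) - (d0 + 3 * h * d1 + (3 * h) ^ 2 / 2 * d2))) / (4 * h ^ 2)
        + (iteratedDeriv 2 u (b + h) - d2) / 4 := by
    have hh2 : (4 : ℝ) * h ^ 2 ≠ 0 := by positivity
    field_simp
    ring_nf
    simp only [d0]
  rw [show b + h = b + 1 * h from by ring] at *
  rw [key]
  have habs : |(5 * (u (b + 1 * h) - (d0 + h * d1 + h ^ 2 / 2 * d2))
        - 4 * (u (b + 2 * h) - (d0 + 2 * h * d1 + (2 * h) ^ 2 / 2 * d2))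
        + (u (b + 3 * h) - (d0 + 3 * h * d1 + (3 * h) ^ 2 / 2 * d2))) / (4 * h ^ 2)
        + (iteratedDeriv 2 u (b + 1 * h) - d2) / 4|
      ≤ (5 * (M' * h ^ 3 / 2) + 4 * (M' * (2 * h) ^ 3 / 2) + M' * (3 * h) ^ 3 / 2) / (4 * h ^ 2)
        + M' * h / 4 := by
    have h4 : (0 : ℝ) < 4 * h ^ 2 := by positivity
    calc |(5 * (u (b + 1 * h) - (d0 + h * d1 + h ^ 2 / 2 * d2))
        - 4 * (u (b + 2 * h) - (d0 + 2 * h * d1 + (2 * h) ^ 2 / 2 * d2))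
        + (u (b + 3 * h) - (d0 + 3 * h * d1 + (3 * h) ^ 2 / 2 * d2))) / (4 * h ^ 2)
        + (iteratedDeriv 2 u (b + 1 * h) - d2) / 4|
        ≤ |(5 * (u (b + 1 * h) - (d0 + h * d1 + h ^ 2 / 2 * d2))
        - 4 * (u (b + 2 * h) - (d0 + 2 * h * d1 + (2 * h) ^ 2 / 2 * d2))
        + (u (b + 3 * h) - (d0 + 3 * h * d1 + (3 * h) ^ 2 / 2 * d2)))| / (4 * h ^ 2)
        + |iteratedDeriv 2 u (b + 1 * h) - d2| / 4 := by
          refine (abs_add_le _ _).trans (le_of_eq ?_)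
          rw [abs_div, abs_div, abs_of_pos h4, abs_of_pos (by norm_num : (0:ℝ) < 4)]
      _ ≤ (5 * (M' * h ^ 3 / 2) + 4 * (M' * (2 * h) ^ 3 / 2) + M' * (3 * h) ^ 3 / 2) / (4 * h ^ 2)
        + M' * h / 4 := by
          have hnum : True := trivial
          clear hnum
          have hbig : |5 * (u (b + 1 * h) - (d0 + h * d1 + h ^ 2 / 2 * d2))
        - 4 * (u (b + 2 * h) - (d0 + 2 * h * d1 + (2 * h) ^ 2 / 2 * d2))
        + (u (b + 3 * h) - (d0 + 3 * h * d1 + (3 * h) ^ 2 / 2 * d2))|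
              ≤ 5 * (M' * h ^ 3 / 2) + 4 * (M' * (2 * h) ^ 3 / 2) + M' * (3 * h) ^ 3 / 2 := by
            calc |(5 * (u (b + 1 * h) - (d0 + h * d1 + h ^ 2 / 2 * d2))
        - 4 * (u (b + 2 * h) - (d0 + 2 * h * d1 + (2 * h) ^ 2 / 2 * d2))
        + (u (b + 3 * h) - (d0 + 3 * h * d1 + (3 * h) ^ 2 / 2 * d2)))|
                ≤ 5 * |u (b + 1 * h) - (d0 + h * d1 + h ^ 2 / 2 * d2)|
                  + 4 * |u (b + 2 * h) - (d0 + 2 * h * d1 + (2 * h) ^ 2 / 2 * d2)|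
                  + |u (b + 3 * h) - (d0 + 3 * h * d1 + (3 * h) ^ 2 / 2 * d2)| := by
                  have := abs_add_le (5 * (u (b + 1 * h) - (d0 + h * d1 + h ^ 2 / 2 * d2))
                    - 4 * (u (b + 2 * h) - (d0 + 2 * h * d1 + (2 * h) ^ 2 / 2 * d2)))
                    (u (b + 3 * h) - (d0 + 3 * h * d1 + (3 * h) ^ 2 / 2 * d2))
                  have h2 := abs_sub (5 * (u (b + 1 * h) - (d0 + h * d1 + h ^ 2 / 2 * d2)))
                    (4 * (u (b + 2 * h) - (d0 + 2 * h * d1 + (2 * h) ^ 2 / 2 * d2)))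
                  rw [abs_mul, abs_mul] at h2
                  simp only [abs_of_pos, show |(5:ℝ)| = 5 from by norm_num,
                    show |(4:ℝ)| = 4 from by norm_num] at h2
                  linarith
              _ ≤ 5 * (M' * h ^ 3 / 2) + 4 * (M' * (2 * h) ^ 3 / 2) + M' * (3 * h) ^ 3 / 2 := by
                  have hR1 : |u (b + 1 * h) - (d0 + h * d1 + h ^ 2 / 2 * d2)| ≤ M' * h ^ 3 / 2 := by
                    convert R1 using 3 <;> ring
                  have hR2 : |u (b + 2 * h) - (d0 + 2 * h * d1 + (2 * h) ^ 2 / 2 * d2)|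
                      ≤ M' * (2 * h) ^ 3 / 2 := by convert R2 using 3 <;> ring
                  have hR3 : |u (b + 3 * h) - (d0 + 3 * h * d1 + (3 * h) ^ 2 / 2 * d2)|
                      ≤ M' * (3 * h) ^ 3 / 2 := by convert R3 using 3 <;> ring
                  linarith
          gcongr
  refine habs.trans ?_
  have hne : h ≠ 0 := ne_of_gt hh
  have : (5 * (M' * h ^ 3 / 2) + 4 * (M' * (2 * h) ^ 3 / 2) + M' * (3 * h) ^ 3 / 2) / (4 * h ^ 2)
      + M' * h / 4 = 8 * M' * h + M' * h / 4 := by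
    field_simp
    ring
  rw [this]
  nlinarith [hM'0, hh.le]
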